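/- arXiv:2504.10633 — 3 statements merged into one kernel-verified Lean document; each statement's English description precedes it below -/
import Mathlib

section
/- Let M_N := Σ_{n=1}^{N} ( f(n, a_n, X_{n−1}) − φ_f(n, X_{n−1}) ). In addition let (y_n)_{n≥1} be integrable real random variables with a common mean μ := E[y_n] ≠ 0 such that, for every n ≥ 1, y_n is 𝓕_n-measurable and independent of the σ-algebra generated by 𝓕_{n−1} together with a_n, and set O_N := Σ_{n=1}^{N} ( 1 − y_n/μ ). Then the product process N ↦ M_N · O_N is a martingale with respect to (𝓕_N); equivalently, the compensated sum M and the compensated counting martingale O are orthogonal. (This is the vanishing cross-covariation computation in the proof of the martingale convergence lemma used for the CLT for renewal-driven systems, in discrete-jump-time form.) -/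
open MeasureTheory ProbabilityTheory

lemma freezing_integral {Ω E T : Type*} [MeasurableSpace Ω] [MeasurableSpace E]
    [MeasurableSpace T] (μ : Measure Ω) [IsProbabilityMeasure μ] {a : Ω → E} {W : Ω → T}
    (ha : Measurable a) (hW : Measurable W) (hind : IndepFun a W μ)
    {h : E × T → ℝ} (hh : Measurable h)
    (hint : Integrable h ((μ.map a).prod (μ.map W))) :
    ∫ ω, h (a ω, W ω) ∂μ = ∫ ω, ∫ ω', h (a ω', W ω) ∂μ ∂μ := by
  haveI : IsProbabilityMeasure (μ.map a) := Measure.isProbabilityMeasure_map ha.aemeasurable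
  haveI : IsProbabilityMeasure (μ.map W) := Measure.isProbabilityMeasure_map hW.aemeasurable
  have hmap : μ.map (fun ω => (a ω, W ω)) = (μ.map a).prod (μ.map W) :=
    (indepFun_iff_map_prod_eq_prod_map_map ha.aemeasurable hW.aemeasurable).mp hind
  have hsm : StronglyMeasurable fun t : T => ∫ e, h (e, t) ∂(μ.map a) := by
    have : Measurable fun p : T × E => h (p.2, p.1) :=
      hh.comp (measurable_snd.prodMk measurable_fst)
    exact this.stronglyMeasurable.integral_prod_right'
  calc ∫ ω, h (a ω, W ω) ∂μ
      = ∫ p, h p ∂(μ.map fun ω => (a ω, W ω)) :=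
        (integral_map (ha.prodMk hW).aemeasurable hh.aestronglyMeasurable).symm
    _ = ∫ p, h p ∂((μ.map a).prod (μ.map W)) := by rw [hmap]
    _ = ∫ t, ∫ e, h (e, t) ∂(μ.map a) ∂(μ.map W) := integral_prod_symm _ hint
    _ = ∫ ω, ∫ e, h (e, W ω) ∂(μ.map a) ∂μ :=
        integral_map hW.aemeasurable hsm.aestronglyMeasurable
    _ = ∫ ω, ∫ ω', h (a ω', W ω) ∂μ ∂μ := by
        refine integral_congr_ae (Filter.Eventually.of_forall fun ω => ?_)
        exact integral_map ha.aemeasurable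
          ((hh.comp (measurable_id.prodMk measurable_const)).aestronglyMeasurable)

/-- Orthogonality of the compensated sum `M` and the compensated counting
martingale `O`: if `yₙ` is `𝓕ₙ`-measurable with common mean `c ≠ 0` and independent of the
σ-algebra generated by `𝓕_{n−1}` together with `aₙ`, and `O_N = ∑_{n=1}^N (1 − yₙ/c)`,
then `N ↦ M_N · O_N` is a martingale (vanishing cross-covariation, discrete-jump-time form). -/
theorem compensated_sum_mul_counting_martingale_is_martingale
    {Ω : Type*} {mΩ : MeasurableSpace Ω} {μ : Measure Ω} [IsProbabilityMeasure μ]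
    (𝓕 : Filtration ℕ mΩ)
    {E S : Type*} [MeasurableSpace E] [MeasurableSpace S]
    (a : ℕ → Ω → E) (X : ℕ → Ω → S)
    (ha_meas : ∀ n, 1 ≤ n → Measurable[𝓕 n] (a n))
    (ha_indep : ∀ n, 1 ≤ n →
      Indep (MeasurableSpace.comap (a n) inferInstance) (𝓕 (n - 1)) μ)
    (ha_ident : ∀ n, 1 ≤ n → IdentDistrib (a n) (a 1) μ μ)
    (hX : ∀ n, Measurable[𝓕 n] (X n))
    (f : ℕ → E → S → ℝ)
    (hf_meas : ∀ n, Measurable fun p : E × S => f n p.1 p.2)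
    (hf_bdd : ∃ C, ∀ n e s, |f n e s| ≤ C)
    (φ : ℕ → S → ℝ)
    (hφ : ∀ n x, φ n x = ∫ ω, f n (a 1 ω) x ∂μ)
    (M : ℕ → Ω → ℝ)
    (hM : ∀ N ω, M N ω =
      ∑ n ∈ Finset.Icc 1 N, (f n (a n ω) (X (n - 1) ω) - φ n (X (n - 1) ω)))
    (y : ℕ → Ω → ℝ)
    (hy_meas : ∀ n, 1 ≤ n → Measurable[𝓕 n] (y n))
    (hy_int : ∀ n, 1 ≤ n → Integrable (y n) μ)
    (c : ℝ) (hc : c ≠ 0)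
    (hy_mean : ∀ n, 1 ≤ n → ∫ ω, y n ω ∂μ = c)
    (hy_indep : ∀ n, 1 ≤ n →
      Indep (MeasurableSpace.comap (y n) inferInstance)
        ((𝓕 (n - 1)) ⊔ MeasurableSpace.comap (a n) inferInstance) μ)
    (O : ℕ → Ω → ℝ)
    (hO : ∀ N ω, O N ω = ∑ n ∈ Finset.Icc 1 N, (1 - y n ω / c)) :
    Martingale (fun N ω => M N ω * O N ω) 𝓕 μ := by
  obtain ⟨C₀, hC₀⟩ := hf_bdd
  set C := max C₀ 0 with hCdef
  have hC : ∀ n e s, |f n e s| ≤ C := fun n e s => le_trans (hC₀ n e s) (le_max_left _ _)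
  have hCnn : (0:ℝ) ≤ C := le_max_right _ _
  have habs_sub : ∀ x z : ℝ, |x - z| ≤ |x| + |z| := fun x z => abs_sub x z
  -- global measurability
  have haG : ∀ n, 1 ≤ n → Measurable (a n) := fun n hn => (ha_meas n hn).mono (𝓕.le n) le_rfl
  have hXG : ∀ n, Measurable (X n) := fun n => (hX n).mono (𝓕.le n) le_rfl
  have hyG : ∀ n, 1 ≤ n → Measurable (y n) := fun n hn => (hy_meas n hn).mono (𝓕.le n) le_rfl
  -- φ measurable and bounded
  have hφ_meas : ∀ n, Measurable (φ n) := by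
    intro n
    have h1 : Measurable fun p : S × Ω => f n (a 1 p.2) p.1 :=
      (hf_meas n).comp (((haG 1 le_rfl).comp measurable_snd).prodMk measurable_fst)
    have h2 := h1.stronglyMeasurable.integral_prod_right' (ν := μ)
    have heq : φ n = fun x => ∫ ω, f n (a 1 ω) x ∂μ := funext fun x => hφ n x
    rw [heq]
    exact h2.measurable
  have hφ_bdd : ∀ n x, |φ n x| ≤ C := by
    intro n x
    rw [hφ]
    have := norm_integral_le_of_norm_le_const (μ := μ) (C := C)
      (f := fun ω => f n (a 1 ω) x)
      (Filter.Eventually.of_forall fun ω => by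
        simpa [Real.norm_eq_abs] using hC n (a 1 ω) x)
    simpa [Real.norm_eq_abs] using this
  -- adaptedness
  have hMmeas : ∀ N, Measurable[𝓕 N] (M N) := by
    intro N
    have heq : M N = fun ω =>
        ∑ n ∈ Finset.Icc 1 N, (f n (a n ω) (X (n-1) ω) - φ n (X (n-1) ω)) :=
      funext (hM N)
    rw [heq]
    refine Finset.measurable_sum _ fun n hn => ?_
    rw [Finset.mem_Icc] at hn
    have han : Measurable[𝓕 N] (a n) := (ha_meas n hn.1).mono (𝓕.mono hn.2) le_rfl
    have hXn : Measurable[𝓕 N] (X (n-1)) :=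
      (hX (n-1)).mono (𝓕.mono (le_trans (Nat.sub_le n 1) hn.2)) le_rfl
    exact ((hf_meas n).comp (han.prodMk hXn)).sub ((hφ_meas n).comp hXn)
  have hOmeas : ∀ N, Measurable[𝓕 N] (O N) := by
    intro N
    have heq : O N = fun ω => ∑ n ∈ Finset.Icc 1 N, (1 - y n ω / c) := funext (hO N)
    rw [heq]
    refine Finset.measurable_sum _ fun n hn => ?_
    rw [Finset.mem_Icc] at hn
    exact measurable_const.sub (((hy_meas n hn.1).mono (𝓕.mono hn.2) le_rfl).div_const c)
  -- bounds
  have hΔbdd : ∀ n (e : E) (x : S), |f n e x - φ n x| ≤ 2 * C := by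
    intro n e x
    calc |f n e x - φ n x| ≤ |f n e x| + |φ n x| := habs_sub _ _
    _ ≤ C + C := add_le_add (hC n e x) (hφ_bdd n x)
    _ = 2 * C := by ring
  have hMbdd : ∀ N ω, |M N ω| ≤ N * (2 * C) := by
    intro N ω
    rw [hM]
    calc |∑ n ∈ Finset.Icc 1 N, (f n (a n ω) (X (n-1) ω) - φ n (X (n-1) ω))|
        ≤ ∑ n ∈ Finset.Icc 1 N, |f n (a n ω) (X (n-1) ω) - φ n (X (n-1) ω)| :=
          Finset.abs_sum_le_sum_abs _ _
    _ ≤ ∑ _n ∈ Finset.Icc 1 N, (2 * C) :=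
          Finset.sum_le_sum fun n _ => hΔbdd n _ _
    _ = N * (2 * C) := by
          rw [Finset.sum_const, Nat.card_Icc]
          simp [nsmul_eq_mul]
  -- integrability from boundedness
  have int_of_bdd : ∀ (g : Ω → ℝ), Measurable g → ∀ (B : ℝ), (∀ ω, |g ω| ≤ B) →
      Integrable g μ := fun g hg B hB =>
    ⟨hg.aestronglyMeasurable, HasFiniteIntegral.of_bounded (C := B)
      (Filter.Eventually.of_forall fun ω => by simpa [Real.norm_eq_abs] using hB ω)⟩
  have hMint : ∀ N, Integrable (M N) μ := fun N =>
    int_of_bdd _ ((hMmeas N).mono (𝓕.le N) le_rfl) _ (hMbdd N)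
  have hOint : ∀ N, Integrable (O N) μ := by
    intro N
    have heq : O N = fun ω => ∑ n ∈ Finset.Icc 1 N, (1 - y n ω / c) := funext (hO N)
    rw [heq]
    refine integrable_finset_sum _ fun n hn => ?_
    rw [Finset.mem_Icc] at hn
    exact (integrable_const 1).sub ((hy_int n hn.1).div_const c)
  have hFint : ∀ N, Integrable (fun ω => M N ω * O N ω) μ := fun N =>
    (hOint N).bdd_mul ((hMmeas N).mono (𝓕.le N) le_rfl).aestronglyMeasurable
      (c := N * (2 * C)) (Filter.Eventually.of_forall fun ω => by simpa [Real.norm_eq_abs] using hMbdd N ω)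
  refine martingale_nat (fun N => ((hMmeas N).mul (hOmeas N)).stronglyMeasurable) hFint ?_
  intro i
  refine ae_eq_condExp_of_forall_setIntegral_eq (𝓕.le i) (hFint (i+1))
    (fun s _ _ => (hFint i).integrableOn) ?_
    (((hMmeas i).mul (hOmeas i)).stronglyMeasurable.aestronglyMeasurable)
  intro s hs _

  have hi1 : 1 ≤ i + 1 := Nat.le_add_left 1 i
  have sglob : MeasurableSet s := 𝓕.le i s hs
  set ind : Ω → ℝ := s.indicator (fun _ => (1:ℝ)) with hind_def
  have hind_meas : Measurable[𝓕 i] ind := measurable_const.indicator hs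
  have hind_bdd : ∀ ω, |ind ω| ≤ 1 := by
    intro ω
    by_cases hω : ω ∈ s <;> simp [ind, hω]
  have hind_eq : ∀ (g : Ω → ℝ) ω, s.indicator g ω = g ω * ind ω := by
    intro g ω
    by_cases hω : ω ∈ s <;> simp [ind, hω]
  -- increments
  have hstepM : ∀ ω, M (i+1) ω = M i ω +
      (f (i+1) (a (i+1) ω) (X i ω) - φ (i+1) (X i ω)) := by
    intro ω
    rw [hM, hM, Finset.sum_Icc_succ_top hi1]
    simp [Nat.add_sub_cancel]
  have hstepO : ∀ ω, O (i+1) ω = O i ω + (1 - y (i+1) ω / c) := by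
    intro ω
    rw [hO, hO, Finset.sum_Icc_succ_top hi1]
  -- specialized independence hypotheses
  have hyi : Indep (MeasurableSpace.comap (y (i+1)) inferInstance)
      ((𝓕 i) ⊔ MeasurableSpace.comap (a (i+1)) inferInstance) μ := by
    have := hy_indep (i+1) hi1
    simpa [Nat.add_sub_cancel] using this
  have hai : Indep (MeasurableSpace.comap (a (i+1)) inferInstance) (𝓕 i) μ := by
    have := ha_indep (i+1) hi1
    simpa [Nat.add_sub_cancel] using this
  -- ΔO facts
  have hΔO_int : Integrable (fun ω => 1 - y (i+1) ω / c) μ :=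
    (integrable_const 1).sub ((hy_int (i+1) hi1).div_const c)
  have hEΔO : ∫ ω, (1 - y (i+1) ω / c) ∂μ = 0 := by
    rw [integral_sub (integrable_const 1) ((hy_int (i+1) hi1).div_const c)]
    rw [integral_div, hy_mean (i+1) hi1, integral_const]
    simp [div_self hc]
  have hΔO_comap : Measurable[MeasurableSpace.comap (y (i+1)) inferInstance]
      (fun ω => 1 - y (i+1) ω / c) :=
    measurable_const.sub ((Measurable.of_comap_le le_rfl).div_const c)
  -- key lemma 1: integral of (g · ΔO) vanishes for g measurable wrt 𝓕 i ⊔ σ(a (i+1))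
  have key1 : ∀ g : Ω → ℝ,
      Measurable[(𝓕 i) ⊔ MeasurableSpace.comap (a (i+1)) inferInstance] g →
      Integrable g μ → ∫ ω, g ω * (1 - y (i+1) ω / c) ∂μ = 0 := by
    intro g hgm hgint
    have hfun : IndepFun g (fun ω => 1 - y (i+1) ω / c) μ := by
      rw [IndepFun_iff_Indep]
      exact indep_of_indep_of_le_right
        (indep_of_indep_of_le_left hyi.symm hgm.comap_le) hΔO_comap.comap_le
    have h3 := hfun.integral_fun_mul_eq_mul_integral hgint.aestronglyMeasurable hΔO_int.aestronglyMeasurable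
    calc ∫ ω, g ω * (1 - y (i+1) ω / c) ∂μ
        = (∫ ω, g ω ∂μ) * ∫ ω, (1 - y (i+1) ω / c) ∂μ := h3
      _ = 0 := by rw [hEΔO, mul_zero]
  -- measurability of the ΔM increment wrt 𝓕 i ⊔ σ(a (i+1))
  have ham' : Measurable[(𝓕 i) ⊔ MeasurableSpace.comap (a (i+1)) inferInstance] (a (i+1)) :=
    Measurable.of_comap_le le_sup_right
  have hXm' : Measurable[(𝓕 i) ⊔ MeasurableSpace.comap (a (i+1)) inferInstance] (X i) :=
    (hX i).mono le_sup_left le_rfl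
  have hΔM_sup : Measurable[(𝓕 i) ⊔ MeasurableSpace.comap (a (i+1)) inferInstance]
      (fun ω => f (i+1) (a (i+1) ω) (X i ω) - φ (i+1) (X i ω)) :=
    ((hf_meas (i+1)).comp (ham'.prodMk hXm')).sub ((hφ_meas (i+1)).comp hXm')
  have hΔM_glob : Measurable (fun ω => f (i+1) (a (i+1) ω) (X i ω) - φ (i+1) (X i ω)) :=
    hΔM_sup.mono (sup_le (𝓕.le i) ((haG (i+1) hi1).comap_le)) le_rfl
  have hind_glob : Measurable ind := hind_meas.mono (𝓕.le i) le_rfl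
  -- key lemma 2 (freezing): the middle cross term vanishes
  have hOind_int : Integrable (fun ω => O i ω * ind ω) μ :=
    ((hOint i).indicator sglob).congr
      (Filter.Eventually.of_forall fun ω => hind_eq (O i) ω)
  have key2 : ∫ ω, (f (i+1) (a (i+1) ω) (X i ω) - φ (i+1) (X i ω)) * (O i ω * ind ω) ∂μ
      = 0 := by
    set W : Ω → S × ℝ := fun ω => (X i ω, O i ω * ind ω) with hW_def
    have hWi : Measurable[𝓕 i] W := (hX i).prodMk ((hOmeas i).mul hind_meas)
    have hWg : Measurable W := hWi.mono (𝓕.le i) le_rfl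
    have hag : Measurable (a (i+1)) := haG (i+1) hi1
    haveI : IsProbabilityMeasure (μ.map (a (i+1))) := Measure.isProbabilityMeasure_map hag.aemeasurable
    haveI : IsProbabilityMeasure (μ.map W) := Measure.isProbabilityMeasure_map hWg.aemeasurable
    have hfun : IndepFun (a (i+1)) W μ := by
      rw [IndepFun_iff_Indep]
      exact indep_of_indep_of_le_right hai hWi.comap_le
    set h : E × (S × ℝ) → ℝ := fun p => (f (i+1) p.1 p.2.1 - φ (i+1) p.2.1) * p.2.2
      with hh_def
    have hhmeas : Measurable h := by
      apply Measurable.mul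
      · exact ((hf_meas (i+1)).comp
          (measurable_fst.prodMk (measurable_fst.comp measurable_snd))).sub
          ((hφ_meas (i+1)).comp (measurable_fst.comp measurable_snd))
      · exact measurable_snd.comp measurable_snd
    -- integrability of h on the product measure
    have hsnd : ((μ.map (a (i+1))).prod (μ.map W)).map Prod.snd = μ.map W := by
      rw [Measure.map_snd_prod, measure_univ, one_smul]
    have h1 : Integrable (fun q : S × ℝ => |q.2|) (μ.map W) := by
      rw [integrable_map_measure (measurable_snd.abs.aestronglyMeasurable) hWg.aemeasurable]
      exact hOind_int.abs
    have habs_int : Integrable (fun p : E × (S × ℝ) => |p.2.2|)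
        ((μ.map (a (i+1))).prod (μ.map W)) := by
      have h3 : Integrable ((fun q : S × ℝ => |q.2|) ∘ Prod.snd)
          ((μ.map (a (i+1))).prod (μ.map W)) := by
        rw [← integrable_map_measure (measurable_snd.abs.aestronglyMeasurable)
          measurable_snd.aemeasurable, hsnd]
        exact h1
      exact h3
    have hint : Integrable h ((μ.map (a (i+1))).prod (μ.map W)) := by
      refine (habs_int.const_mul (2 * C)).mono' hhmeas.aestronglyMeasurable
        (Filter.Eventually.of_forall fun p => ?_)
      rw [Real.norm_eq_abs, hh_def, abs_mul]
      exact mul_le_mul_of_nonneg_right (hΔbdd (i+1) p.1 p.2.1) (abs_nonneg _)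
    have hfreeze := freezing_integral μ hag hWg hfun hhmeas hint
    have hzero : ∀ ω, ∫ ω', h (a (i+1) ω', W ω) ∂μ = 0 := by
      intro ω
      have hint' : Integrable (fun ω' => f (i+1) (a (i+1) ω') (X i ω)) μ :=
        int_of_bdd _ ((hf_meas (i+1)).comp (hag.prodMk measurable_const)) C
          (fun ω' => hC _ _ _)
      have heq1 : ∫ ω', h (a (i+1) ω', W ω) ∂μ
          = (∫ ω', (f (i+1) (a (i+1) ω') (X i ω) - φ (i+1) (X i ω)) ∂μ)
            * (O i ω * ind ω) := integral_mul_const _ _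
      have heq2 : ∫ ω', f (i+1) (a (i+1) ω') (X i ω) ∂μ = φ (i+1) (X i ω) := by
        rw [hφ]
        exact ((ha_ident (i+1) hi1).comp
          ((hf_meas (i+1)).comp (measurable_id.prodMk measurable_const))).integral_eq
      rw [heq1, integral_sub hint' (integrable_const _), heq2, integral_const]
      simp
    rw [show (∫ ω, (f (i+1) (a (i+1) ω) (X i ω) - φ (i+1) (X i ω)) * (O i ω * ind ω) ∂μ)
        = ∫ ω, h (a (i+1) ω, W ω) ∂μ from rfl, hfreeze]
    simp only [hzero, integral_zero]
  -- now assemble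
  rw [← integral_indicator sglob, ← integral_indicator sglob]
  have expand : ∀ ω, s.indicator (fun ω => M (i+1) ω * O (i+1) ω) ω
      = s.indicator (fun ω => M i ω * O i ω) ω
        + (M i ω * ind ω) * (1 - y (i+1) ω / c)
        + (f (i+1) (a (i+1) ω) (X i ω) - φ (i+1) (X i ω)) * (O i ω * ind ω)
        + ((f (i+1) (a (i+1) ω) (X i ω) - φ (i+1) (X i ω)) * ind ω)
          * (1 - y (i+1) ω / c) := by
    intro ω
    by_cases hω : ω ∈ s
    · rw [Set.indicator_of_mem hω, Set.indicator_of_mem hω, hstepM ω, hstepO ω]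
      have : ind ω = 1 := by simp [ind, hω]
      rw [this]
      ring
    · have : ind ω = 0 := by simp [ind, hω]
      rw [Set.indicator_of_notMem hω, Set.indicator_of_notMem hω, this]
      ring
  have I1 : Integrable (s.indicator (fun ω => M i ω * O i ω)) μ :=
    (hFint i).indicator sglob
  have IT1 : Integrable (fun ω => (M i ω * ind ω) * (1 - y (i+1) ω / c)) μ :=
    hΔO_int.bdd_mul
      ((((hMmeas i).mul hind_meas).mono (𝓕.le i) le_rfl).aestronglyMeasurable)
      (c := (i * (2 * C)) * 1) (Filter.Eventually.of_forall fun ω => by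
        rw [Real.norm_eq_abs, abs_mul]
        exact mul_le_mul (hMbdd i ω) (hind_bdd ω) (abs_nonneg _)
          (by positivity))
  have IT2 : Integrable
      (fun ω => (f (i+1) (a (i+1) ω) (X i ω) - φ (i+1) (X i ω)) * (O i ω * ind ω)) μ :=
    hOind_int.bdd_mul hΔM_glob.aestronglyMeasurable
      (c := 2 * C) (Filter.Eventually.of_forall fun ω => by rw [Real.norm_eq_abs]; exact hΔbdd (i+1) _ _)
  have IT3 : Integrable
      (fun ω => ((f (i+1) (a (i+1) ω) (X i ω) - φ (i+1) (X i ω)) * ind ω)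
        * (1 - y (i+1) ω / c)) μ :=
    hΔO_int.bdd_mul (hΔM_glob.mul hind_glob).aestronglyMeasurable
      (c := (2 * C) * 1) (Filter.Eventually.of_forall fun ω => by
        rw [Real.norm_eq_abs, abs_mul]
        exact mul_le_mul (hΔbdd (i+1) _ _) (hind_bdd ω) (abs_nonneg _) (by positivity))
  symm
  calc ∫ ω, s.indicator (fun ω => M (i+1) ω * O (i+1) ω) ω ∂μ
      = ∫ ω, (s.indicator (fun ω => M i ω * O i ω) ω
          + (M i ω * ind ω) * (1 - y (i+1) ω / c)
          + (f (i+1) (a (i+1) ω) (X i ω) - φ (i+1) (X i ω)) * (O i ω * ind ω)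
          + ((f (i+1) (a (i+1) ω) (X i ω) - φ (i+1) (X i ω)) * ind ω)
            * (1 - y (i+1) ω / c)) ∂μ :=
        integral_congr_ae (Filter.Eventually.of_forall expand)
    _ = ∫ ω, s.indicator (fun ω => M i ω * O i ω) ω ∂μ := by
        have Isum12 : Integrable (fun ω => s.indicator (fun ω => M i ω * O i ω) ω
            + (M i ω * ind ω) * (1 - y (i+1) ω / c)) μ := I1.add IT1
        have Isum123 : Integrable (fun ω => s.indicator (fun ω => M i ω * O i ω) ω
            + (M i ω * ind ω) * (1 - y (i+1) ω / c)
            + (f (i+1) (a (i+1) ω) (X i ω) - φ (i+1) (X i ω)) * (O i ω * ind ω)) μ :=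
          Isum12.add IT2
        rw [integral_add Isum123 IT3, integral_add Isum12 IT2, integral_add I1 IT1]
        rw [key1 (fun ω => M i ω * ind ω)
            (((hMmeas i).mul hind_meas).mono le_sup_left le_rfl)
            (int_of_bdd _ (((hMmeas i).mul hind_meas).mono (𝓕.le i) le_rfl)
              ((i * (2 * C)) * 1) (fun ω => by
                rw [abs_mul]
                exact mul_le_mul (hMbdd i ω) (hind_bdd ω) (abs_nonneg _) (by positivity))),
          key2,
          key1 (fun ω => (f (i+1) (a (i+1) ω) (X i ω) - φ (i+1) (X i ω)) * ind ω)
            (hΔM_sup.mul (hind_meas.mono le_sup_left le_rfl))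
            (int_of_bdd _ (hΔM_glob.mul hind_glob) ((2 * C) * 1) (fun ω => by
              rw [abs_mul]
              exact mul_le_mul (hΔbdd (i+1) _ _) (hind_bdd ω) (abs_nonneg _)
                (by positivity)))]
        ring
end

section
/- Let M > 0, let R : [0,M] → [0,∞) be nondecreasing and right-continuous with R(0) = 0, and let μ_R be its Lebesgue–Stieltjes measure on [0,M]. Let g ≥ 0, let U : [0,M] → [0,∞) be bounded, and let X : [0,M] → ℝ be bounded and Borel measurable, satisfying |X(t)| ≤ U(t) + g · ∫_{[0,t)} |X(s)| dμ_R(s) for every t ∈ [0,M]. Then sup_{t∈[0,M]} |X(t)| ≤ C + C⁴, where C := max{ e^{g·μ_R([0,M])}, sup_{t∈[0,M]} U(t), g, μ_R([0,M]) }. (This is the pathwise Grönwall bound (equation (26)) established in the proof of the tightness lemma, Lemma 5.3.) -/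
set_option maxHeartbeats 1000000


open MeasureTheory

/-- The pathwise Grönwall bound (equation (26)) from the proof of the
tightness lemma (Lemma 5.3): if `|X(t)| ≤ U(t) + g ∫_{[0,t)} |X| dμ_R` on `[0,M]`, then
`sup_{[0,M]} |X| ≤ C + C⁴` with
`C = max{ e^{g μ_R([0,M])}, sup_{[0,M]} U, g, μ_R([0,M]) }`. -/
theorem pathwise_gronwall_bound
    (M : ℝ) (hM : 0 < M)
    (R : StieltjesFunction ℝ) (hR0 : R 0 = 0)
    (g : ℝ) (hg : 0 ≤ g)
    (U X : ℝ → ℝ)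
    (hU_nonneg : ∀ t ∈ Set.Icc (0:ℝ) M, 0 ≤ U t)
    (hU_bdd : ∃ B, ∀ t ∈ Set.Icc (0:ℝ) M, U t ≤ B)
    (hX_meas : Measurable X)
    (hX_bdd : ∃ B, ∀ t ∈ Set.Icc (0:ℝ) M, |X t| ≤ B)
    (hineq : ∀ t ∈ Set.Icc (0:ℝ) M,
      |X t| ≤ U t + g * ∫ s in Set.Ico (0:ℝ) t, |X s| ∂(R.measure))
    (C : ℝ)
    (hC : C = max
      (max (Real.exp (g * (R.measure (Set.Icc (0:ℝ) M)).toReal))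
        (sSup (U '' Set.Icc (0:ℝ) M)))
      (max g ((R.measure (Set.Icc (0:ℝ) M)).toReal))) :
    ∀ t ∈ Set.Icc (0:ℝ) M, |X t| ≤ C + C ^ 4 := by
  obtain ⟨B, hB⟩ := hX_bdd
  obtain ⟨BU, hBU⟩ := hU_bdd
  set μ := R.measure with hμdef
  have h0M : (0:ℝ) ∈ Set.Icc (0:ℝ) M := ⟨le_refl 0, hM.le⟩
  set A := sSup (U '' Set.Icc (0:ℝ) M) with hAdef
  have hbddU : BddAbove (U '' Set.Icc (0:ℝ) M) :=
    ⟨BU, by rintro _ ⟨t, ht, rfl⟩; exact hBU t ht⟩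
  have hUA : ∀ t ∈ Set.Icc (0:ℝ) M, U t ≤ A := fun t ht => le_csSup hbddU ⟨t, ht, rfl⟩
  have hA0 : 0 ≤ A := (hU_nonneg 0 h0M).trans (hUA 0 h0M)
  -- facts about C
  have hCexp : Real.exp (g * (μ (Set.Icc (0:ℝ) M)).toReal) ≤ C := by
    rw [hC]; exact le_max_of_le_left (le_max_left _ _)
  have hCA : A ≤ C := by rw [hC]; exact le_max_of_le_left (le_max_right _ _)
  have hC1 : 1 ≤ C := le_trans (Real.one_le_exp (by positivity)) hCexp
  have hC0 : 0 ≤ C := zero_le_one.trans hC1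
  -- finiteness
  have hfin : μ (Set.Icc (0:ℝ) M) ≠ ⊤ := by
    rw [hμdef, R.measure_Icc]; exact ENNReal.ofReal_ne_top
  have hsub_fin : ∀ s : Set ℝ, s ⊆ Set.Icc (0:ℝ) M → μ s ≠ ⊤ := fun s hs =>
    ((measure_mono hs).trans_lt hfin.lt_top).ne
  -- integrability
  have hXint : IntegrableOn (fun s => |X s|) (Set.Icc (0:ℝ) M) μ := by
    apply Measure.integrableOn_of_bounded hfin hX_meas.abs.aestronglyMeasurable
    refine (ae_restrict_iff' measurableSet_Icc).2 (Filter.Eventually.of_forall fun x hx => ?_)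
    rw [Real.norm_eq_abs, abs_abs]; exact hB x hx
  have hXint' : ∀ s : Set ℝ, s ⊆ Set.Icc (0:ℝ) M → IntegrableOn (fun s => |X s|) s μ :=
    fun s hs => hXint.mono_set hs
  have hXnn : ∀ s : Set ℝ, (0:ℝ → ℝ) ≤ᵐ[μ.restrict s] fun u => |X u| := fun s =>
    Filter.Eventually.of_forall fun x => abs_nonneg _
  -- the case g = 0
  rcases eq_or_lt_of_le hg with hg0 | hgpos
  · intro t ht
    have h1 := hineq t ht
    rw [← hg0, zero_mul, add_zero] at h1
    have h2 : U t ≤ C := (hUA t ht).trans hCA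
    nlinarith [pow_nonneg hC0 4]
  -- g > 0 henceforth
  set I : ℝ → ℝ := fun a => ∫ s in Set.Icc (0:ℝ) a, |X s| ∂μ with hIdef
  have hI_nonneg : ∀ a, 0 ≤ I a := fun a => integral_nonneg fun x => abs_nonneg _
  have hAgI : ∀ a, 0 ≤ A + g * I a := fun a =>
    add_nonneg hA0 (mul_nonneg hg (hI_nonneg a))
  set ε : ℝ := 1 / (3 * g) with hεdef
  have hε : 0 < ε := by positivity
  have hgε : g * ε = 1/3 := by rw [hεdef]; field_simp
  -- chunk lemma
  have chunk : ∀ a a' : ℝ, a ∈ Set.Icc (0:ℝ) M → a' ∈ Set.Ioc a M →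
      (∀ t ∈ Set.Ioc a a', (μ (Set.Ioo a t)).toReal ≤ ε) →
      A + g * I a' ≤ (A + g * I a) * Real.exp (3/2 * (g * (μ (Set.Ioc a a')).toReal)) := by
    intro a a' ha ha' hsmall
    have hsub : Set.Ioc a a' ⊆ Set.Icc (0:ℝ) M := fun x hx =>
      ⟨ha.1.trans hx.1.le, hx.2.trans ha'.2⟩
    set T := sSup ((fun s => |X s|) '' Set.Ioc a a') with hTdef
    have hne : (Set.Ioc a a').Nonempty := ⟨a', ⟨ha'.1, le_refl _⟩⟩
    have hbddX : BddAbove ((fun s => |X s|) '' Set.Ioc a a') :=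
      ⟨B, by rintro _ ⟨x, hx, rfl⟩; exact hB x (hsub hx)⟩
    have hTle : ∀ x ∈ Set.Ioc a a', |X x| ≤ T := fun x hx => le_csSup hbddX ⟨x, hx, rfl⟩
    have hT0 : 0 ≤ T := (abs_nonneg _).trans (hTle a' ⟨ha'.1, le_refl _⟩)
    -- pointwise bound on the chunk
    have hpt : ∀ t ∈ Set.Ioc a a', |X t| ≤ A + g * I a + g * (ε * T) := by
      intro t ht
      have htIcc : t ∈ Set.Icc (0:ℝ) M := hsub ht
      have hIooSub : Set.Ioo a t ⊆ Set.Icc (0:ℝ) M := fun x hx =>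
        ⟨ha.1.trans hx.1.le, hx.2.le.trans htIcc.2⟩
      have hIccSub : Set.Icc (0:ℝ) a ⊆ Set.Icc (0:ℝ) M := fun x hx =>
        ⟨hx.1, hx.2.trans ha.2⟩
      have hdisj : Disjoint (Set.Icc (0:ℝ) a) (Set.Ioo a t) := by
        rw [Set.disjoint_left]; rintro x ⟨_, hxa⟩ ⟨hax, _⟩; exact absurd hxa (not_le.2 hax)
      have hunionsub : Set.Ico (0:ℝ) t ⊆ Set.Icc (0:ℝ) a ∪ Set.Ioo a t := by
        rintro x ⟨hx0, hxt⟩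
        rcases le_or_gt x a with h | h
        · exact Or.inl ⟨hx0, h⟩
        · exact Or.inr ⟨h, hxt⟩
      have hunion : ∫ s in Set.Icc (0:ℝ) a ∪ Set.Ioo a t, |X s| ∂μ
          = I a + ∫ s in Set.Ioo a t, |X s| ∂μ :=
        setIntegral_union hdisj measurableSet_Ioo (hXint' _ hIccSub) (hXint' _ hIooSub)
      have h1 : ∫ s in Set.Ico (0:ℝ) t, |X s| ∂μ ≤ I a + ∫ s in Set.Ioo a t, |X s| ∂μ := by
        rw [← hunion]
        exact setIntegral_mono_set ((hXint' _ hIccSub).union (hXint' _ hIooSub)) (hXnn _)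
          (HasSubset.Subset.eventuallyLE hunionsub)
      have h2 : ∫ s in Set.Ioo a t, |X s| ∂μ ≤ ε * T := by
        have hc1 : ∫ s in Set.Ioo a t, |X s| ∂μ ≤ ∫ _ in Set.Ioo a t, T ∂μ := by
          refine setIntegral_mono_on (hXint' _ hIooSub)
            (integrableOn_const (hsub_fin _ hIooSub)) measurableSet_Ioo
            fun x hx => hTle x ⟨hx.1, hx.2.le.trans ht.2⟩
        have hc2 : ∫ _ in Set.Ioo a t, T ∂μ = (μ (Set.Ioo a t)).toReal * T := by
          rw [setIntegral_const, smul_eq_mul]; rfl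
        calc ∫ s in Set.Ioo a t, |X s| ∂μ ≤ (μ (Set.Ioo a t)).toReal * T := by
              rw [← hc2]; exact hc1
          _ ≤ ε * T := mul_le_mul_of_nonneg_right (hsmall t ht) hT0
      have h3 := hineq t htIcc
      have h4 := hUA t htIcc
      have h5 : g * ∫ s in Set.Ico (0:ℝ) t, |X s| ∂μ ≤ g * (I a + ε * T) :=
        mul_le_mul_of_nonneg_left (h1.trans (add_le_add_right h2 _)) hg
      have h6 : g * (I a + ε * T) = g * I a + g * (ε * T) := by ring
      linarith
    have hTbound : T ≤ A + g * I a + g * (ε * T) :=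
      csSup_le (hne.image _) (by rintro _ ⟨x, hx, rfl⟩; exact hpt x hx)
    have hT32 : T ≤ 3/2 * (A + g * I a) := by
      have h7 : g * (ε * T) = 1/3 * T := by rw [← mul_assoc, hgε]
      linarith
    -- integral over the chunk
    set m := (μ (Set.Ioc a a')).toReal with hmdef
    have hm0 : 0 ≤ m := ENNReal.toReal_nonneg
    have hIocSub : Set.Ioc a a' ⊆ Set.Icc (0:ℝ) M := hsub
    have hIccSub : Set.Icc (0:ℝ) a ⊆ Set.Icc (0:ℝ) M := fun x hx => ⟨hx.1, hx.2.trans ha.2⟩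
    have hdisj2 : Disjoint (Set.Icc (0:ℝ) a) (Set.Ioc a a') := by
      rw [Set.disjoint_left]; rintro x ⟨_, hxa⟩ ⟨hax, _⟩; exact absurd hxa (not_le.2 hax)
    have hIsplit : I a' = I a + ∫ s in Set.Ioc a a', |X s| ∂μ := by
      have := setIntegral_union hdisj2 measurableSet_Ioc (hXint' _ hIccSub)
        (hXint' _ hIocSub) (f := fun s => |X s|)
      rw [Set.Icc_union_Ioc_eq_Icc ha.1 ha'.1.le] at this
      exact this
    have hIoc : ∫ s in Set.Ioc a a', |X s| ∂μ ≤ m * T := by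
      have hc1 : ∫ s in Set.Ioc a a', |X s| ∂μ ≤ ∫ _ in Set.Ioc a a', T ∂μ :=
        setIntegral_mono_on (hXint' _ hIocSub)
          (integrableOn_const (hsub_fin _ hIocSub)) measurableSet_Ioc hTle
      rw [setIntegral_const, smul_eq_mul] at hc1
      exact hc1
    have step : A + g * I a' ≤ (A + g * I a) * (1 + 3/2 * (g * m)) := by
      have h8 : g * (m * T) ≤ g * (m * (3/2 * (A + g * I a))) :=
        mul_le_mul_of_nonneg_left (mul_le_mul_of_nonneg_left hT32 hm0) hg
      have h9 : g * ∫ s in Set.Ioc a a', |X s| ∂μ ≤ g * (m * T) :=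
        mul_le_mul_of_nonneg_left hIoc hg
      rw [hIsplit]
      nlinarith
    have hexp : 1 + 3/2 * (g * m) ≤ Real.exp (3/2 * (g * m)) := by
      have := Real.add_one_le_exp (3/2 * (g * m)); linarith
    calc A + g * I a' ≤ (A + g * I a) * (1 + 3/2 * (g * m)) := step
      _ ≤ (A + g * I a) * Real.exp (3/2 * (g * m)) :=
          mul_le_mul_of_nonneg_left hexp (hAgI a)
  -- main induction
  have key : ∀ n : ℕ, ∀ a ∈ Set.Icc (0:ℝ) M, (μ (Set.Ioc a M)).toReal ≤ n * ε →
      A + g * I M ≤ (A + g * I a) * Real.exp (3/2 * (g * (μ (Set.Ioc a M)).toReal)) := by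
    intro n
    induction n with
    | zero =>
      intro a ha hle
      have hIocSub : Set.Ioc a M ⊆ Set.Icc (0:ℝ) M := fun x hx => ⟨ha.1.trans hx.1.le, hx.2⟩
      have h0 : (μ (Set.Ioc a M)).toReal = 0 :=
        le_antisymm (by simpa using hle) ENNReal.toReal_nonneg
      have hμ0 : μ (Set.Ioc a M) = 0 :=
        ((ENNReal.toReal_eq_zero_iff _).1 h0).resolve_right (hsub_fin _ hIocSub)
      have hint0 : ∫ s in Set.Ioc a M, |X s| ∂μ = 0 := by
        rw [Measure.restrict_eq_zero.2 hμ0, integral_zero_measure]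
      have hIM : I M = I a := by
        have hIccSub : Set.Icc (0:ℝ) a ⊆ Set.Icc (0:ℝ) M := fun x hx => ⟨hx.1, hx.2.trans ha.2⟩
        have hdisj2 : Disjoint (Set.Icc (0:ℝ) a) (Set.Ioc a M) := by
          rw [Set.disjoint_left]; rintro x ⟨_, hxa⟩ ⟨hax, _⟩; exact absurd hxa (not_le.2 hax)
        have := setIntegral_union hdisj2 measurableSet_Ioc (hXint' _ hIccSub)
          (hXint' _ hIocSub) (f := fun s => |X s|)
        rw [Set.Icc_union_Ioc_eq_Icc ha.1 ha.2] at this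
        rw [hIdef]; simp only
        rw [this, hint0, add_zero]
      rw [h0, mul_zero, mul_zero, Real.exp_zero, mul_one, hIM]
    | succ n ih =>
      intro a ha hle
      by_cases hcase : (μ (Set.Ioc a M)).toReal ≤ n * ε
      · exact ih a ha hcase
      push_neg at hcase
      have haM : a < M := by
        by_contra hna
        push_neg at hna
        rw [Set.Ioc_eq_empty (not_lt.2 hna), measure_empty] at hcase
        simp only [ENNReal.toReal_zero] at hcase
        nlinarith [hε.le, Nat.cast_nonneg (α := ℝ) n]
      set S := {u : ℝ | u ∈ Set.Icc a M ∧ μ (Set.Ioo a u) ≤ ENNReal.ofReal ε} with hSdef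
      have haS : a ∈ S := ⟨⟨le_refl a, haM.le⟩, by simp⟩
      have hSne : S.Nonempty := ⟨a, haS⟩
      have hSbdd : BddAbove S := ⟨M, fun u hu => hu.1.2⟩
      set a' := sSup S with ha'def
      have ha'mem : a' ∈ Set.Icc a M := ⟨le_csSup hSbdd haS, csSup_le hSne fun u hu => hu.1.2⟩
      have ha'Icc : a' ∈ Set.Icc (0:ℝ) M := ⟨ha.1.trans ha'mem.1, ha'mem.2⟩
      -- chunks up to a' are small
      have hchunk_small : ∀ t ∈ Set.Ioc a a', (μ (Set.Ioo a t)).toReal ≤ ε := by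
        intro t ht
        refine ENNReal.toReal_le_of_le_ofReal hε.le ?_
        have hta : 0 < t - a := sub_pos.2 ht.1
        set v : ℕ → ℝ := fun n => t - (t - a)/(n+1) with hvdef
        have hvlt : ∀ n : ℕ, v n < t := by
          intro n
          have : 0 < (t - a)/((n:ℝ)+1) := by positivity
          simp only [hvdef]; linarith
        have hvmono : Monotone fun n : ℕ => Set.Ioc a (v n) := by
          intro i j hij
          apply Set.Ioc_subset_Ioc_right
          simp only [hvdef]
          have h1 : (t - a)/((j:ℝ)+1) ≤ (t - a)/((i:ℝ)+1) := by
            gcongr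
            all_goals first
              | exact hta.le
              | positivity
              | exact_mod_cast Nat.succ_le_succ hij
          linarith
        have hcover : Set.Ioo a t = ⋃ n, Set.Ioc a (v n) := by
          ext x
          simp only [Set.mem_Ioo, Set.mem_iUnion, Set.mem_Ioc]
          constructor
          · rintro ⟨hax, hxt⟩
            have hx : 0 < t - x := sub_pos.2 hxt
            obtain ⟨n, hn⟩ := exists_nat_ge ((t - a)/(t - x))
            refine ⟨n, hax, ?_⟩
            have h1 : t - a ≤ ((n:ℝ)+1) * (t - x) := by
              have := (div_le_iff₀ hx).1 (hn.trans (le_add_of_nonneg_right zero_le_one))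
              linarith [this]
            have h2 : (t - a)/((n:ℝ)+1) ≤ t - x := by
              rw [div_le_iff₀ (by positivity)]
              linarith
            simp only [hvdef]; linarith
          · rintro ⟨n, hax, hxv⟩
            exact ⟨hax, hxv.trans_lt (hvlt n)⟩
        rw [hcover]
        refine le_of_tendsto (tendsto_measure_iUnion_atTop hvmono) ?_
        refine Filter.Eventually.of_forall fun n => ?_
        have hvn : v n < a' := (hvlt n).trans_le ht.2
        obtain ⟨u, huS, hvu⟩ := exists_lt_of_lt_csSup hSne hvn
        calc μ (Set.Ioc a (v n)) ≤ μ (Set.Ioo a u) :=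
              measure_mono fun x hx => ⟨hx.1, hx.2.trans_lt hvu⟩
          _ ≤ ENNReal.ofReal ε := huS.2
      by_cases hMS : μ (Set.Ioo a M) ≤ ENNReal.ofReal ε
      · -- one final chunk reaches M
        have hc := chunk a M ha ⟨haM, le_refl M⟩ (fun t ht =>
          ENNReal.toReal_le_of_le_ofReal hε.le
            ((measure_mono (Set.Ioo_subset_Ioo_right ht.2)).trans hMS))
        exact hc
      · push_neg at hMS
        -- the chunk has mass at least ε
        have hmass : ENNReal.ofReal ε ≤ μ (Set.Ioc a a') := by
          rcases eq_or_lt_of_le ha'mem.2 with heq | hlt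
          · rw [heq]
            exact le_trans hMS.le (measure_mono Set.Ioo_subset_Ioc_self)
          · set u : ℕ → ℝ := fun n => a' + (M - a')/(n+1) with hudef
            have hMa' : 0 < M - a' := sub_pos.2 hlt
            have hugt : ∀ n : ℕ, a' < u n := by
              intro n
              have : 0 < (M - a')/((n:ℝ)+1) := by positivity
              simp only [hudef]; linarith
            have huleM : ∀ n : ℕ, u n ≤ M := by
              intro n
              have h1 : (M - a')/((n:ℝ)+1) ≤ M - a' := by
                apply div_le_self hMa'.le
                have : (0:ℝ) ≤ (n:ℝ) := Nat.cast_nonneg n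
                linarith
              simp only [hudef]; linarith
            have hanti : Antitone fun n : ℕ => Set.Ioo a (u n) := by
              intro i j hij
              apply Set.Ioo_subset_Ioo_right
              simp only [hudef]
              have h1 : (M - a')/((j:ℝ)+1) ≤ (M - a')/((i:ℝ)+1) := by
                gcongr
                all_goals first
                  | exact hMa'.le
                  | positivity
                  | exact_mod_cast Nat.succ_le_succ hij
              linarith
            have hiInter : ⋂ n, Set.Ioo a (u n) = Set.Ioc a a' := by
              ext x
              simp only [Set.mem_iInter, Set.mem_Ioo, Set.mem_Ioc]
              constructor
              · intro h
                refine ⟨(h 0).1, ?_⟩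
                by_contra hxa'
                push_neg at hxa'
                have hxa : 0 < x - a' := sub_pos.2 hxa'
                obtain ⟨n, hn⟩ := exists_nat_ge ((M - a')/(x - a'))
                have h1 : M - a' ≤ ((n:ℝ)+1) * (x - a') := by
                  have := (div_le_iff₀ hxa).1 (hn.trans (le_add_of_nonneg_right zero_le_one))
                  linarith [this]
                have h2 : (M - a')/((n:ℝ)+1) ≤ x - a' := by
                  rw [div_le_iff₀ (by positivity)]
                  linarith
                have := (h n).2
                simp only [hudef] at this
                linarith
              · rintro ⟨hax, hxa'⟩ n
                exact ⟨hax, hxa'.trans_lt (hugt n)⟩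
            have hIooSub : ∀ n : ℕ, Set.Ioo a (u n) ⊆ Set.Icc (0:ℝ) M := fun n x hx =>
              ⟨ha.1.trans hx.1.le, hx.2.le.trans (huleM n)⟩
            have htend := tendsto_measure_iInter_atTop (μ := μ)
              (fun n => measurableSet_Ioo.nullMeasurableSet) hanti
              ⟨0, hsub_fin _ (hIooSub 0)⟩
            rw [hiInter] at htend
            refine ge_of_tendsto htend ?_
            refine Filter.Eventually.of_forall fun n => ?_
            by_contra hcon
            push_neg at hcon
            have hunS : u n ∈ S := ⟨⟨ha'mem.1.trans (hugt n).le, huleM n⟩, hcon.le⟩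
            exact absurd (le_csSup hSbdd hunS) (not_le.2 (hugt n))
        have hd' : a < a' := by
          by_contra h
          push_neg at h
          rw [Set.Ioc_eq_empty (not_lt.2 h), measure_empty] at hmass
          rw [nonpos_iff_eq_zero, ENNReal.ofReal_eq_zero] at hmass
          exact absurd hmass (not_le.2 hε)
        have hc := chunk a a' ha ⟨hd', ha'mem.2⟩ hchunk_small
        have hIocaSub : Set.Ioc a M ⊆ Set.Icc (0:ℝ) M := fun x hx => ⟨ha.1.trans hx.1.le, hx.2⟩
        have hIocaa'Sub : Set.Ioc a a' ⊆ Set.Icc (0:ℝ) M := fun x hx =>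
          ⟨ha.1.trans hx.1.le, hx.2.trans ha'mem.2⟩
        have hIoca'Sub : Set.Ioc a' M ⊆ Set.Icc (0:ℝ) M := fun x hx =>
          ⟨ha'Icc.1.trans hx.1.le, hx.2⟩
        have hdisj3 : Disjoint (Set.Ioc a a') (Set.Ioc a' M) := by
          rw [Set.disjoint_left]; rintro x ⟨_, hxa⟩ ⟨hax, _⟩; exact absurd hxa (not_le.2 hax)
        have hsplit : μ (Set.Ioc a M) = μ (Set.Ioc a a') + μ (Set.Ioc a' M) := by
          rw [← measure_union hdisj3 measurableSet_Ioc, Set.Ioc_union_Ioc_eq_Ioc hd'.le ha'mem.2]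
        have hsplitR : (μ (Set.Ioc a M)).toReal
            = (μ (Set.Ioc a a')).toReal + (μ (Set.Ioc a' M)).toReal := by
          rw [hsplit, ENNReal.toReal_add (hsub_fin _ hIocaa'Sub) (hsub_fin _ hIoca'Sub)]
        have hεle : ε ≤ (μ (Set.Ioc a a')).toReal := by
          have := ENNReal.toReal_mono (hsub_fin _ hIocaa'Sub) hmass
          rwa [ENNReal.toReal_ofReal hε.le] at this
        have hrest : (μ (Set.Ioc a' M)).toReal ≤ n * ε := by
          push_cast at hle
          linarith
        have hIH := ih a' ha'Icc hrest
        have hexp0 : (0:ℝ) ≤ Real.exp (3/2 * (g * (μ (Set.Ioc a' M)).toReal)) :=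
          (Real.exp_pos _).le
        calc A + g * I M
            ≤ (A + g * I a') * Real.exp (3/2 * (g * (μ (Set.Ioc a' M)).toReal)) := hIH
          _ ≤ ((A + g * I a) * Real.exp (3/2 * (g * (μ (Set.Ioc a a')).toReal)))
              * Real.exp (3/2 * (g * (μ (Set.Ioc a' M)).toReal)) :=
              mul_le_mul_of_nonneg_right hc hexp0
          _ = (A + g * I a) * Real.exp (3/2 * (g * (μ (Set.Ioc a M)).toReal)) := by
              rw [mul_assoc, ← Real.exp_add, hsplitR]; ring_nf
  -- assemble
  obtain ⟨n₀, hn₀⟩ := exists_nat_ge ((μ (Set.Ioc (0:ℝ) M)).toReal / ε)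
  have hkey := key n₀ 0 h0M (by
    rw [div_le_iff₀ hε] at hn₀
    linarith)
  -- I 0
  have hI0 : I 0 = (μ {0}).toReal * |X 0| := by
    rw [hIdef]
    simp only [Set.Icc_self]
    rw [Measure.restrict_singleton, integral_smul_measure, integral_dirac, smul_eq_mul]
  have hX0 : |X 0| ≤ A := by
    have h1 := hineq 0 h0M
    rw [Set.Ico_self, Measure.restrict_empty, integral_zero_measure, mul_zero, add_zero] at h1
    exact h1.trans (hUA 0 h0M)
  have hμ0fin : μ {0} ≠ ⊤ := hsub_fin _ (by simp [h0M])
  have hμ0nn : 0 ≤ (μ {0}).toReal := ENNReal.toReal_nonneg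
  have hsplit0 : (μ (Set.Icc (0:ℝ) M)).toReal
      = (μ {0}).toReal + (μ (Set.Ioc (0:ℝ) M)).toReal := by
    have hdisj : Disjoint ({0} : Set ℝ) (Set.Ioc (0:ℝ) M) := by
      rw [Set.disjoint_left]; rintro x rfl ⟨h1, _⟩; exact absurd h1 (lt_irrefl 0)
    have hIocSub : Set.Ioc (0:ℝ) M ⊆ Set.Icc (0:ℝ) M := fun x hx => ⟨hx.1.le, hx.2⟩
    have : μ (Set.Icc (0:ℝ) M) = μ {0} + μ (Set.Ioc (0:ℝ) M) := by
      rw [← measure_union hdisj measurableSet_Ioc]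
      congr 1
      rw [show ({0} : Set ℝ) = Set.Icc 0 0 by simp, Set.Icc_union_Ioc_eq_Icc le_rfl hM.le]
    rw [this, ENNReal.toReal_add hμ0fin (hsub_fin _ hIocSub)]
  set mubar := (μ (Set.Icc (0:ℝ) M)).toReal with hmubardef
  have hmubarnn : 0 ≤ mubar := ENNReal.toReal_nonneg
  have hIocnn : 0 ≤ (μ (Set.Ioc (0:ℝ) M)).toReal := ENNReal.toReal_nonneg
  have hfinal : A + g * I M ≤ A * Real.exp (2 * (g * mubar)) := by
    have h1 : A + g * I 0 ≤ A * (1 + g * (μ {0}).toReal) := by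
      rw [hI0]
      have h1a := mul_le_mul_of_nonneg_left hX0 (mul_nonneg hg hμ0nn)
      linarith
    have h2 : A * (1 + g * (μ {0}).toReal) ≤ A * Real.exp (3/2 * (g * (μ {0}).toReal)) := by
      apply mul_le_mul_of_nonneg_left _ hA0
      have h3 := Real.add_one_le_exp (3/2 * (g * (μ {0}).toReal))
      have h4 := mul_nonneg hg hμ0nn
      linarith
    calc A + g * I M
        ≤ (A + g * I 0) * Real.exp (3/2 * (g * (μ (Set.Ioc (0:ℝ) M)).toReal)) := hkey
      _ ≤ (A * Real.exp (3/2 * (g * (μ {0}).toReal)))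
          * Real.exp (3/2 * (g * (μ (Set.Ioc (0:ℝ) M)).toReal)) :=
          mul_le_mul_of_nonneg_right (h1.trans h2) (Real.exp_pos _).le
      _ = A * Real.exp (3/2 * (g * mubar)) := by
          rw [mul_assoc, ← Real.exp_add, hsplit0]; congr 1; rw [Real.exp_eq_exp]; ring
      _ ≤ A * Real.exp (2 * (g * mubar)) := by
          apply mul_le_mul_of_nonneg_left _ hA0
          apply Real.exp_le_exp.2
          have h5 := mul_nonneg hg hmubarnn
          linarith
  intro t ht
  have hfin1 : |X t| ≤ A + g * I M := by
    have h1 := hineq t ht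
    have h2 : ∫ s in Set.Ico (0:ℝ) t, |X s| ∂μ ≤ I M := by
      refine setIntegral_mono_set hXint (hXnn _) (HasSubset.Subset.eventuallyLE ?_)
      rintro x ⟨hx0, hxt⟩
      exact ⟨hx0, hxt.le.trans ht.2⟩
    have h3 := mul_le_mul_of_nonneg_left h2 hg
    have h4 := hUA t ht
    linarith
  have hE : Real.exp (2 * (g * mubar)) = Real.exp (g * mubar) * Real.exp (g * mubar) := by
    rw [← Real.exp_add]; ring_nf
  have hE0 : (0:ℝ) ≤ Real.exp (g * mubar) := (Real.exp_pos _).le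
  have hfin2 : A * Real.exp (2 * (g * mubar)) ≤ C * C * C := by
    rw [hE, ← mul_assoc]
    have h1 : A * Real.exp (g * mubar) ≤ C * C :=
      mul_le_mul hCA hCexp hE0 hC0
    exact mul_le_mul h1 hCexp hE0 (mul_nonneg hC0 hC0)
  have h7 : C * C * C * 1 ≤ C * C * C * C :=
    mul_le_mul_of_nonneg_left hC1 (mul_nonneg (mul_nonneg hC0 hC0) hC0)
  have : C * C * C ≤ C + C ^ 4 := by nlinarith [h7, hC0]
  linarith
end

section
/- Let M > 0, let R : [0,M] → [0,∞) be nondecreasing and right-continuous with R(0) = 0 and Lebesgue–Stieltjes measure μ_R, let f : [0,M] → ℝ be bounded Borel with F := sup_{s∈[0,M]} |f(s)|, let U : [0,M] → ℝ be bounded Borel, and let X : [0,M] → ℝ be bounded Borel satisfying X(t) = ∫_{[0,t)} f(s) X(s) dμ_R(s) + U(t) for every t ∈ [0,M]. Then for every θ ∈ (0, M]: sup_{t∈[0,M−θ]} sup_{δ∈[0,θ)} |X(t+δ) − X(t)| ≤ F·(C + C⁴)·sup_{t∈[0,M−θ]} μ_R([t, t+θ)) + sup_{t∈[0,M−θ]}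 sup_{δ∈[0,θ)} |U(t+δ) − U(t)|, where C := max{ e^{F·μ_R([0,M])}, sup_{t∈[0,M]} |U(t)|, F, μ_R([0,M]) }. (This is the pathwise oscillation bound established in the proof of the tightness lemma, Lemma 5.3.) -/
open MeasureTheory Set ENNReal

lemma key_simplex (m : Measure ℝ) [IsFiniteMeasure m] (n : ℕ) :
    (n + 1 : ℝ≥0∞) * ∫⁻ s, (m (Set.Iio s)) ^ n ∂m ≤ (m Set.univ) ^ (n + 1) := by
  classical
  set P : Measure (Fin (n+1) → ℝ) := Measure.pi (fun _ => m) with hP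
  set E : Fin (n+1) → Set (Fin (n+1) → ℝ) :=
    fun j => {x | ∀ i, i ≠ j → x i < x j} with hE
  have hEmeas : ∀ j, MeasurableSet (E j) := by
    intro j
    have : E j = ⋂ i, ⋂ (_ : i ≠ j), {x : Fin (n+1) → ℝ | x i < x j} := by
      ext x; simp [hE]
    rw [this]
    exact MeasurableSet.iInter fun i => MeasurableSet.iInter fun _ =>
      measurableSet_lt (measurable_pi_apply i) (measurable_pi_apply j)
  have hdisj : Pairwise (Function.onFun Disjoint E) := by
    intro j k hjk
    refine Set.disjoint_left.2 fun x hxj hxk => ?_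
    exact lt_asymm (hxj k hjk.symm) (hxk j hjk)
  have hsymm : ∀ j, P (E j) = P (E 0) := by
    intro j
    have hmp := measurePreserving_piCongrLeft (fun _ : Fin (n+1) => m) (Equiv.swap j 0)
    have hpre : (MeasurableEquiv.piCongrLeft (fun _ : Fin (n+1) => ℝ) (Equiv.swap j 0)) ⁻¹' (E 0)
        = E j := by
      ext x
      have hx : ∀ a, (Equiv.piCongrLeft (fun _ : Fin (n+1) => ℝ) (Equiv.swap j 0)) x a
          = x (Equiv.swap j 0 a) := fun a => by
        have := Equiv.piCongrLeft_apply_apply (P := fun _ : Fin (n+1) => ℝ) (e := Equiv.swap j 0)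
          (f := x) (a := Equiv.swap j 0 a)
        rwa [Equiv.swap_apply_self] at this
      simp only [Set.mem_preimage, hE, Set.mem_setOf_eq,
        MeasurableEquiv.coe_piCongrLeft, Equiv.piCongrLeft_apply_apply]
      constructor
      · intro h i hij
        have := h (Equiv.swap j 0 i) (by
          simp only [ne_eq, Equiv.swap_apply_eq_iff]
          simpa using hij)
        simpa [hx] using this
      · intro h i hi0
        have := h ((Equiv.swap j 0).symm i) (by
          simp only [Equiv.symm_swap, ne_eq]
          intro hc
          apply hi0
          have := congrArg (Equiv.swap j 0) hc
          simpa using this)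
        simpa [hx] using this
    calc P (E j)
        = P ((MeasurableEquiv.piCongrLeft (fun _ : Fin (n+1) => ℝ) (Equiv.swap j 0)) ⁻¹' (E 0)) := by
          rw [hpre]
      _ = P (E 0) := hmp.measure_preimage (hEmeas 0).nullMeasurableSet
  have hE0 : P (E 0) = ∫⁻ s, (m (Set.Iio s)) ^ n ∂m := by
    have hmp := measurePreserving_piFinSuccAbove (fun _ : Fin (n+1) => m) 0
    set e := MeasurableEquiv.piFinSuccAbove (fun _ : Fin (n+1) => ℝ) 0 with he
    set S : Set (ℝ × (Fin n → ℝ)) := {p | ∀ i, p.2 i < p.1} with hS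
    have hSmeas : MeasurableSet S := by
      have : S = ⋂ i, {p : ℝ × (Fin n → ℝ) | p.2 i < p.1} := by ext p; simp [hS]
      rw [this]
      exact MeasurableSet.iInter fun i =>
        measurableSet_lt (measurable_snd.eval) measurable_fst
    have hpre : e ⁻¹' S = E 0 := by
      ext x
      simp only [Set.mem_preimage, hS, hE, Set.mem_setOf_eq, he,
        MeasurableEquiv.piFinSuccAbove, MeasurableEquiv.coe_mk, Equiv.coe_fn_mk]
      constructor
      · intro h i hi
        obtain ⟨j, rfl⟩ := Fin.exists_succAbove_eq hi
        exact h j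
      · intro h j
        exact h _ (Fin.succAbove_ne 0 j)
    have h1 : P (E 0) = (m.prod (Measure.pi (fun _ : Fin n => m))) S := by
      rw [hP, ← hpre]
      exact (hmp.measure_preimage hSmeas.nullMeasurableSet)
    rw [h1, Measure.prod_apply hSmeas]
    congr 1
    ext s
    have : (Prod.mk s ⁻¹' S) = Set.pi Set.univ (fun _ : Fin n => Set.Iio s) := by
      ext y; simp [hS]
    rw [this, Measure.pi_pi]
    simp
  have hsum : ∑ j : Fin (n+1), P (E j) = P (⋃ j, E j) := by
    rw [← tsum_fintype (L := .unconditional _)]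
    exact (measure_iUnion hdisj fun j => hEmeas j).symm
  have hle : P (⋃ j, E j) ≤ P Set.univ := measure_mono (Set.subset_univ _)
  have huniv : P Set.univ = (m Set.univ) ^ (n+1) := by
    rw [hP, Measure.pi_univ]
    simp
  calc (n + 1 : ℝ≥0∞) * ∫⁻ s, (m (Set.Iio s)) ^ n ∂m
      = ∑ _j : Fin (n+1), P (E 0) := by
        rw [hE0, Finset.sum_const]
        simp [nsmul_eq_mul, mul_comm]
    _ = ∑ j : Fin (n+1), P (E j) := by
        exact Finset.sum_congr rfl fun j _ => (hsymm j).symm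
    _ = P (⋃ j, E j) := hsum
    _ ≤ P Set.univ := hle
    _ = (m Set.univ) ^ (n+1) := huniv

lemma key_int (ν : Measure ℝ) (t : ℝ) (hfin : ∀ s : ℝ, ν (Set.Ico 0 s) ≠ ∞) (n : ℕ) :
    ∫ s in Set.Ico (0:ℝ) t, ((ν (Set.Ico (0:ℝ) s)).toReal) ^ n ∂ν
      ≤ ((ν (Set.Ico (0:ℝ) t)).toReal) ^ (n+1) / (n+1) := by
  set m := ν.restrict (Set.Ico (0:ℝ) t) with hm
  haveI : IsFiniteMeasure m := ⟨by
    rw [hm, Measure.restrict_apply_univ]; exact (hfin t).lt_top⟩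
  have hmono : Measurable fun s : ℝ => ν (Set.Ico (0:ℝ) s) := by
    apply Monotone.measurable
    intro a b hab
    exact measure_mono (Set.Ico_subset_Ico le_rfl hab)
  -- rewrite the Bochner integral as toReal of a lintegral
  have h1 : ∫ s in Set.Ico (0:ℝ) t, ((ν (Set.Ico (0:ℝ) s)).toReal) ^ n ∂ν
      = (∫⁻ s, (ν (Set.Ico (0:ℝ) s)) ^ n ∂m).toReal := by
    rw [hm]
    rw [show (fun s : ℝ => ((ν (Set.Ico (0:ℝ) s)).toReal) ^ n)
        = fun s : ℝ => ((ν (Set.Ico (0:ℝ) s)) ^ n).toReal from funext fun s => (toReal_pow _ n).symm]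
    exact integral_toReal ((hmono.pow_const n).aemeasurable)
      (Filter.Eventually.of_forall fun s => (pow_ne_top (hfin s)).lt_top)
  have h2 : ∫⁻ s, (ν (Set.Ico (0:ℝ) s)) ^ n ∂m = ∫⁻ s, (m (Set.Iio s)) ^ n ∂m := by
    rw [hm]
    refine setLIntegral_congr_fun measurableSet_Ico ?_
    intro s hs
    have : (ν.restrict (Set.Ico (0:ℝ) t)) (Set.Iio s) = ν (Set.Ico (0:ℝ) s) := by
      rw [Measure.restrict_apply measurableSet_Iio]
      congr 1
      ext x
      simp only [Set.mem_inter_iff, Set.mem_Iio, Set.mem_Ico]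
      exact ⟨fun ⟨h1, h2, _⟩ => ⟨h2, h1⟩, fun ⟨h1, h2⟩ => ⟨h2, h1, h2.trans hs.2⟩⟩
    simp only [this]
  have h3 := key_simplex m n
  have hT : m Set.univ = ν (Set.Ico (0:ℝ) t) := by
    rw [hm, Measure.restrict_apply_univ]
  rw [hT] at h3
  have hAfin : ∫⁻ s, (m (Set.Iio s)) ^ n ∂m ≠ ∞ := by
    refine ne_top_of_le_ne_top (pow_ne_top (hfin t)) (le_trans ?_ h3)
    calc ∫⁻ s, (m (Set.Iio s)) ^ n ∂m = 1 * ∫⁻ s, (m (Set.Iio s)) ^ n ∂m := (one_mul _).symm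
      _ ≤ (n + 1 : ℝ≥0∞) * ∫⁻ s, (m (Set.Iio s)) ^ n ∂m := mul_le_mul_left (by simp) _
  rw [h1, h2]
  have h5 : ((n:ℝ)+1) * (∫⁻ s, (m (Set.Iio s)) ^ n ∂m).toReal
      ≤ ((ν (Set.Ico (0:ℝ) t)).toReal) ^ (n+1) := by
    have h4 := ENNReal.toReal_mono (pow_ne_top (hfin t)) h3
    rwa [ENNReal.toReal_mul, ENNReal.toReal_pow,
      (by rw [(by push_cast; ring : ((n:ℝ≥0∞)+1) = ((n+1:ℕ):ℝ≥0∞)), ENNReal.toReal_natCast]; push_cast; ring : ((n:ℝ≥0∞)+1).toReal = (n:ℝ)+1)] at h4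
  rw [le_div_iff₀ (by positivity : (0:ℝ) < (n:ℝ)+1)]
  linarith

lemma gronwall_iter (M : ℝ) (ν : Measure ℝ) (hfin : ∀ s : ℝ, ν (Set.Ico 0 s) ≠ ∞)
    (f U X : ℝ → ℝ) (hf_meas : Measurable f) (hX_meas : Measurable X)
    (F B D : ℝ) (hF0 : 0 ≤ F) (hB0 : 0 ≤ B) (hD0 : 0 ≤ D)
    (hFs : ∀ s ∈ Set.Icc (0:ℝ) M, |f s| ≤ F)
    (hB : ∀ t ∈ Set.Icc (0:ℝ) M, |X t| ≤ B)
    (hD : ∀ t ∈ Set.Icc (0:ℝ) M, |U t| ≤ D)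
    (heq : ∀ t ∈ Set.Icc (0:ℝ) M,
      X t = (∫ s in Set.Ico (0:ℝ) t, f s * X s ∂ν) + U t) :
    ∀ n : ℕ, ∀ t ∈ Set.Icc (0:ℝ) M,
      |X t| ≤ D * ∑ k ∈ Finset.range n,
          (F * (ν (Set.Ico (0:ℝ) t)).toReal) ^ k / (Nat.factorial k : ℝ)
        + B * (F * (ν (Set.Ico (0:ℝ) t)).toReal) ^ n / (Nat.factorial n : ℝ) := by
  set g : ℝ → ℝ := fun r => (ν (Set.Ico (0:ℝ) r)).toReal with hg
  have hg_nonneg : ∀ r, 0 ≤ g r := fun r => ENNReal.toReal_nonneg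
  have hg_mono : Monotone g := fun a b hab =>
    ENNReal.toReal_mono (hfin b) (measure_mono (Set.Ico_subset_Ico le_rfl hab))
  have hg_meas : Measurable g :=
    (Monotone.measurable (fun a b hab =>
      measure_mono (Set.Ico_subset_Ico le_rfl hab) : Monotone fun r => ν (Set.Ico (0:ℝ) r))).ennreal_toReal
  have hFg : ∀ r, 0 ≤ F * g r := fun r => mul_nonneg hF0 (hg_nonneg r)
  -- integrability helper
  have hint : ∀ (t : ℝ) (h : ℝ → ℝ) (K : ℝ), Measurable h →
      (∀ s ∈ Set.Ico (0:ℝ) t, |h s| ≤ K) → IntegrableOn h (Set.Ico (0:ℝ) t) ν := by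
    intro t h K hmeas hbd
    haveI : IsFiniteMeasure (ν.restrict (Set.Ico (0:ℝ) t)) :=
      ⟨by rw [Measure.restrict_apply_univ]; exact (hfin t).lt_top⟩
    refine Integrable.mono' (integrable_const K) hmeas.aestronglyMeasurable ?_
    exact (ae_restrict_iff' measurableSet_Ico).mpr
      (Filter.Eventually.of_forall fun s hs => by
        simpa [Real.norm_eq_abs, abs_mul] using hbd s hs)
  intro n
  induction n with
  | zero => intro t ht; simpa using hB t ht
  | succ n ih =>
    intro t ht
    have hs_sub : Set.Ico (0:ℝ) t ⊆ Set.Icc (0:ℝ) M :=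
      fun s hs => ⟨hs.1, hs.2.le.trans ht.2⟩
    -- the comparison function
    set Φ : ℝ → ℝ := fun s => D * ∑ k ∈ Finset.range n,
        (F * g s) ^ k / (Nat.factorial k : ℝ)
      + B * (F * g s) ^ n / (Nat.factorial n : ℝ) with hΦ
    have hΦmono : ∀ a b, a ≤ b → Φ a ≤ Φ b := by
      intro a b hab
      have hgab : F * g a ≤ F * g b := mul_le_mul_of_nonneg_left (hg_mono hab) hF0
      have h1 : 0 ≤ F * g a := hFg a
      simp only [hΦ]
      gcongr
    have hΦnonneg : ∀ s, 0 ≤ Φ s := fun s =>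
      add_nonneg (mul_nonneg hD0 (Finset.sum_nonneg fun k _ =>
          div_nonneg (pow_nonneg (hFg s) k) (Nat.cast_nonneg _)))
        (div_nonneg (mul_nonneg hB0 (pow_nonneg (hFg s) n)) (Nat.cast_nonneg _))
    have hΦmeas : Measurable Φ := by
      apply Measurable.add
      · exact (Finset.measurable_sum (Finset.range n) fun k _ =>
          ((hg_meas.const_mul F).pow_const k).div_const _).const_mul D
      · exact (((hg_meas.const_mul F).pow_const n).const_mul B).div_const _
    have e1 : |X t| ≤ (∫ s in Set.Ico (0:ℝ) t, |f s * X s| ∂ν) + D := by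
      rw [heq t ht]
      refine (abs_add_le _ _).trans (add_le_add ?_ (hD t ht))
      simpa [Real.norm_eq_abs, abs_mul] using
        norm_integral_le_integral_norm (μ := ν.restrict (Set.Ico (0:ℝ) t))
          (f := fun s => f s * X s)
    have hIfX : IntegrableOn (fun s => |f s * X s|) (Set.Ico (0:ℝ) t) ν := by
      refine hint t _ (F * B) (hf_meas.mul hX_meas).abs fun s hs => ?_
      have hsM := hs_sub hs
      rw [abs_abs, abs_mul]
      exact mul_le_mul (hFs s hsM) (hB s hsM) (abs_nonneg _) hF0
    have hIΦ : IntegrableOn (fun s => F * Φ s) (Set.Ico (0:ℝ) t) ν := by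
      refine hint t _ (F * Φ t) (hΦmeas.const_mul F) fun s hs => ?_
      rw [abs_of_nonneg (mul_nonneg hF0 (hΦnonneg s))]
      exact mul_le_mul_of_nonneg_left (hΦmono s t hs.2.le) hF0
    have e2 : (∫ s in Set.Ico (0:ℝ) t, |f s * X s| ∂ν)
        ≤ ∫ s in Set.Ico (0:ℝ) t, F * Φ s ∂ν := by
      refine setIntegral_mono_on hIfX hIΦ measurableSet_Ico fun s hs => ?_
      have hsM := hs_sub hs
      calc |f s * X s| = |f s| * |X s| := abs_mul _ _
        _ ≤ F * Φ s := mul_le_mul (hFs s hsM) (ih s hsM) (abs_nonneg _) hF0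
    have hgk : ∀ k : ℕ, IntegrableOn (fun s => g s ^ k) (Set.Ico (0:ℝ) t) ν := by
      intro k
      refine hint t _ (g t ^ k) (hg_meas.pow_const k) fun s hs => ?_
      rw [abs_of_nonneg (pow_nonneg (hg_nonneg s) k)]
      exact pow_le_pow_left₀ (hg_nonneg s) (hg_mono hs.2.le) k
    have hsplit : ∀ s, F * Φ s
        = (∑ k ∈ Finset.range n, (F * D * F ^ k / (Nat.factorial k : ℝ)) * g s ^ k)
          + (F * B * F ^ n / (Nat.factorial n : ℝ)) * g s ^ n := by
      intro s
      simp only [hΦ, mul_pow]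
      rw [mul_add, Finset.mul_sum, Finset.mul_sum]
      congr 1
      · exact Finset.sum_congr rfl fun k _ => by ring
      · ring
    have ckn : ∀ k : ℕ, 0 ≤ F * D * F ^ k / (Nat.factorial k : ℝ) := fun k =>
      div_nonneg (mul_nonneg (mul_nonneg hF0 hD0) (pow_nonneg hF0 k)) (Nat.cast_nonneg _)
    have cbn : 0 ≤ F * B * F ^ n / (Nat.factorial n : ℝ) :=
      div_nonneg (mul_nonneg (mul_nonneg hF0 hB0) (pow_nonneg hF0 n)) (Nat.cast_nonneg _)
    have e3 : (∫ s in Set.Ico (0:ℝ) t, F * Φ s ∂ν)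
        ≤ D * ∑ k ∈ Finset.range n, (F * g t) ^ (k+1) / (Nat.factorial (k+1) : ℝ)
          + B * (F * g t) ^ (n+1) / (Nat.factorial (n+1) : ℝ) := by
      have fact_eq : ∀ k : ℕ, ((Nat.factorial (k+1) : ℝ)) = (k+1) * (Nat.factorial k : ℝ) := by
        intro k; exact_mod_cast Nat.factorial_succ k
      calc (∫ s in Set.Ico (0:ℝ) t, F * Φ s ∂ν)
          = ∫ s in Set.Ico (0:ℝ) t,
              ((∑ k ∈ Finset.range n, (F * D * F ^ k / (Nat.factorial k : ℝ)) * g s ^ k)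
                + (F * B * F ^ n / (Nat.factorial n : ℝ)) * g s ^ n) ∂ν := by
            simp only [hsplit]
        _ = (∑ k ∈ Finset.range n, (F * D * F ^ k / (Nat.factorial k : ℝ))
              * ∫ s in Set.Ico (0:ℝ) t, g s ^ k ∂ν)
            + (F * B * F ^ n / (Nat.factorial n : ℝ)) * ∫ s in Set.Ico (0:ℝ) t, g s ^ n ∂ν := by
            rw [integral_add (integrable_finset_sum _ fun k _ => (hgk k).const_mul _)
              ((hgk n).const_mul _), integral_finset_sum _ fun k _ => (hgk k).const_mul _]
            simp only [integral_const_mul]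
        _ ≤ (∑ k ∈ Finset.range n, (F * D * F ^ k / (Nat.factorial k : ℝ))
              * (g t ^ (k+1) / (k+1)))
            + (F * B * F ^ n / (Nat.factorial n : ℝ)) * (g t ^ (n+1) / (n+1)) := by
            refine add_le_add (Finset.sum_le_sum fun k _ =>
              mul_le_mul_of_nonneg_left ?_ (ckn k)) (mul_le_mul_of_nonneg_left ?_ cbn)
            · exact key_int ν t hfin k
            · exact key_int ν t hfin n
        _ = D * ∑ k ∈ Finset.range n, (F * g t) ^ (k+1) / (Nat.factorial (k+1) : ℝ)
            + B * (F * g t) ^ (n+1) / (Nat.factorial (n+1) : ℝ) := by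
            rw [Finset.mul_sum]
            congr 1
            · refine Finset.sum_congr rfl fun k _ => ?_
              rw [fact_eq k, mul_pow]
              have h1 : (Nat.factorial k : ℝ) ≠ 0 := by positivity
              have h2 : ((k : ℝ) + 1) ≠ 0 := by positivity
              push_cast
              field_simp
              ring
            · rw [fact_eq n, mul_pow]
              have h1 : (Nat.factorial n : ℝ) ≠ 0 := by positivity
              have h2 : ((n : ℝ) + 1) ≠ 0 := by positivity
              push_cast
              field_simp
              ring
    calc |X t| ≤ (∫ s in Set.Ico (0:ℝ) t, |f s * X s| ∂ν) + D := e1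
      _ ≤ (∫ s in Set.Ico (0:ℝ) t, F * Φ s ∂ν) + D := add_le_add_left e2 D
      _ ≤ (D * ∑ k ∈ Finset.range n, (F * g t) ^ (k+1) / (Nat.factorial (k+1) : ℝ)
            + B * (F * g t) ^ (n+1) / (Nat.factorial (n+1) : ℝ)) + D := add_le_add_left e3 D
      _ = D * ∑ k ∈ Finset.range (n+1), (F * g t) ^ k / (Nat.factorial k : ℝ)
            + B * (F * g t) ^ (n+1) / (Nat.factorial (n+1) : ℝ) := by
          rw [Finset.sum_range_succ']
          simp [Nat.factorial]
          ring

lemma gronwall_exp (M : ℝ) (ν : Measure ℝ) (hfin : ∀ s : ℝ, ν (Set.Ico 0 s) ≠ ∞)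
    (f U X : ℝ → ℝ) (hf_meas : Measurable f) (hX_meas : Measurable X)
    (F B D : ℝ) (hF0 : 0 ≤ F) (hB0 : 0 ≤ B) (hD0 : 0 ≤ D)
    (hFs : ∀ s ∈ Set.Icc (0:ℝ) M, |f s| ≤ F)
    (hB : ∀ t ∈ Set.Icc (0:ℝ) M, |X t| ≤ B)
    (hD : ∀ t ∈ Set.Icc (0:ℝ) M, |U t| ≤ D)
    (heq : ∀ t ∈ Set.Icc (0:ℝ) M,
      X t = (∫ s in Set.Ico (0:ℝ) t, f s * X s ∂ν) + U t) :
    ∀ t ∈ Set.Icc (0:ℝ) M,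
      |X t| ≤ D * Real.exp (F * (ν (Set.Ico (0:ℝ) M)).toReal) := by
  intro t ht
  set a := F * (ν (Set.Ico (0:ℝ) t)).toReal with ha
  set A := F * (ν (Set.Ico (0:ℝ) M)).toReal with hA
  have ha0 : 0 ≤ a := mul_nonneg hF0 ENNReal.toReal_nonneg
  have haA : a ≤ A := by
    refine mul_le_mul_of_nonneg_left ?_ hF0
    exact ENNReal.toReal_mono (hfin M) (measure_mono (Set.Ico_subset_Ico le_rfl ht.2))
  have hbd : ∀ n : ℕ, |X t| ≤ D * Real.exp A + B * a ^ n / (Nat.factorial n : ℝ) := by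
    intro n
    refine (gronwall_iter M ν hfin f U X hf_meas hX_meas F B D hF0 hB0 hD0 hFs hB hD heq
      n t ht).trans ?_
    refine add_le_add (mul_le_mul_of_nonneg_left ?_ hD0) le_rfl
    exact (Real.sum_le_exp_of_nonneg ha0 n).trans (Real.exp_le_exp.mpr haA)
  have hlim : Filter.Tendsto (fun n : ℕ => D * Real.exp A + B * a ^ n / (Nat.factorial n : ℝ))
      Filter.atTop (nhds (D * Real.exp A)) := by
    have h1 : Filter.Tendsto (fun n : ℕ => B * (a ^ n / (Nat.factorial n : ℝ)))
        Filter.atTop (nhds (B * 0)) :=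
      (FloorSemiring.tendsto_pow_div_factorial_atTop a).const_mul B
    have := (tendsto_const_nhds (x := D * Real.exp A)).add h1
    simpa [mul_div_assoc] using this
  exact ge_of_tendsto' hlim hbd
open MeasureTheory

/-- The pathwise oscillation bound from the proof of the tightness lemma
(Lemma 5.3): if `X(t) = ∫_{[0,t)} f X dμ_R + U(t)` on `[0,M]`, then for every `θ ∈ (0,M]`,
`sup_{t ∈ [0,M−θ]} sup_{δ ∈ [0,θ)} |X(t+δ) − X(t)|
  ≤ F (C + C⁴) sup_{t ∈ [0,M−θ]} μ_R([t,t+θ)) + sup_{t,δ} |U(t+δ) − U(t)|`,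
where `F = sup_{[0,M]} |f|` and
`C = max{ e^{F μ_R([0,M])}, sup_{[0,M]} |U|, F, μ_R([0,M]) }`. -/
theorem pathwise_oscillation_bound
    (M : ℝ) (hM : 0 < M)
    (R : StieltjesFunction ℝ) (hR0 : R 0 = 0)
    (f U X : ℝ → ℝ)
    (hf_meas : Measurable f)
    (hf_bdd : ∃ B, ∀ s ∈ Set.Icc (0:ℝ) M, |f s| ≤ B)
    (hU_meas : Measurable U)
    (hU_bdd : ∃ B, ∀ t ∈ Set.Icc (0:ℝ) M, |U t| ≤ B)
    (hX_meas : Measurable X)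
    (hX_bdd : ∃ B, ∀ t ∈ Set.Icc (0:ℝ) M, |X t| ≤ B)
    (heq : ∀ t ∈ Set.Icc (0:ℝ) M,
      X t = (∫ s in Set.Ico (0:ℝ) t, f s * X s ∂(R.measure)) + U t)
    (F : ℝ) (hF : F = sSup ((fun s => |f s|) '' Set.Icc (0:ℝ) M))
    (C : ℝ)
    (hC : C = max
      (max (Real.exp (F * (R.measure (Set.Icc (0:ℝ) M)).toReal))
        (sSup ((fun t => |U t|) '' Set.Icc (0:ℝ) M)))
      (max F ((R.measure (Set.Icc (0:ℝ) M)).toReal)))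
    (supμ : ℝ → ℝ)
    (hsupμ : ∀ θ, supμ θ =
      sSup ((fun t => (R.measure (Set.Ico t (t + θ))).toReal) '' Set.Icc (0:ℝ) (M - θ)))
    (oscU : ℝ → ℝ)
    (hoscU : ∀ θ, oscU θ =
      sSup ((fun p : ℝ × ℝ => |U (p.1 + p.2) - U p.1|) ''
        (Set.Icc (0:ℝ) (M - θ) ×ˢ Set.Ico (0:ℝ) θ))) :
    ∀ θ ∈ Set.Ioc (0:ℝ) M, ∀ t ∈ Set.Icc (0:ℝ) (M - θ), ∀ δ ∈ Set.Ico (0:ℝ) θ,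
      |X (t + δ) - X t| ≤ F * (C + C ^ 4) * supμ θ + oscU θ := by
  classical
  set ν := R.measure with hν
  have hfinIcc : ∀ a b : ℝ, ν (Set.Icc a b) ≠ ∞ := by
    intro a b
    rw [hν, R.measure_Icc]
    exact ENNReal.ofReal_ne_top
  have hfin : ∀ s : ℝ, ν (Set.Ico 0 s) ≠ ∞ := fun s =>
    ne_top_of_le_ne_top (hfinIcc 0 s) (measure_mono Set.Ico_subset_Icc_self)
  have h0M : (0:ℝ) ∈ Set.Icc (0:ℝ) M := ⟨le_rfl, hM.le⟩
  -- bounds for f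
  obtain ⟨Bf, hBf⟩ := hf_bdd
  have hFbdd : BddAbove ((fun s => |f s|) '' Set.Icc (0:ℝ) M) :=
    ⟨Bf, by rintro y ⟨s, hs, rfl⟩; exact hBf s hs⟩
  have hFs : ∀ s ∈ Set.Icc (0:ℝ) M, |f s| ≤ F := fun s hs =>
    hF ▸ le_csSup hFbdd ⟨s, hs, rfl⟩
  have hF0 : 0 ≤ F := (abs_nonneg _).trans (hFs 0 h0M)
  -- bounds for U
  obtain ⟨BU, hBU⟩ := hU_bdd
  have hDbdd : BddAbove ((fun t => |U t|) '' Set.Icc (0:ℝ) M) :=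
    ⟨BU, by rintro y ⟨s, hs, rfl⟩; exact hBU s hs⟩
  set D := sSup ((fun t => |U t|) '' Set.Icc (0:ℝ) M) with hDdef
  have hDs : ∀ s ∈ Set.Icc (0:ℝ) M, |U s| ≤ D := fun s hs =>
    le_csSup hDbdd ⟨s, hs, rfl⟩
  have hD0 : 0 ≤ D := (abs_nonneg _).trans (hDs 0 h0M)
  -- bound for X
  obtain ⟨B, hBX⟩ := hX_bdd
  have hB0 : 0 ≤ B := (abs_nonneg _).trans (hBX 0 h0M)
  -- Gronwall bound for X
  have hXK : ∀ t ∈ Set.Icc (0:ℝ) M,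
      |X t| ≤ D * Real.exp (F * (ν (Set.Ico (0:ℝ) M)).toReal) :=
    gronwall_exp M ν hfin f U X hf_meas hX_meas F B D hF0 hB0 hD0 hFs hBX hDs heq
  -- C facts
  have hDC : D ≤ C := by
    rw [hC]
    exact le_max_of_le_left (le_max_right _ _)
  have hexpC : Real.exp (F * (ν (Set.Ico (0:ℝ) M)).toReal) ≤ C := by
    have h1 : F * (ν (Set.Ico (0:ℝ) M)).toReal ≤ F * (ν (Set.Icc (0:ℝ) M)).toReal :=
      mul_le_mul_of_nonneg_left
        (ENNReal.toReal_mono (hfinIcc 0 M) (measure_mono Set.Ico_subset_Icc_self)) hF0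
    rw [hC]
    exact le_max_of_le_left ((Real.exp_le_exp.mpr h1).trans (le_max_left _ _))
  have hC1 : (1:ℝ) ≤ C := by
    rw [hC]
    refine le_max_of_le_left (le_max_of_le_left ?_)
    rw [show (1:ℝ) = Real.exp 0 from Real.exp_zero.symm]
    exact Real.exp_le_exp.mpr (mul_nonneg hF0 ENNReal.toReal_nonneg)
  have hC0 : (0:ℝ) ≤ C := zero_le_one.trans hC1
  have hXC : ∀ r ∈ Set.Icc (0:ℝ) M, |X r| ≤ C * C := by
    intro r hr
    refine (hXK r hr).trans ?_
    exact mul_le_mul hDC hexpC (Real.exp_pos _).le hC0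
  have hCC : C * C ≤ C + C ^ 4 := by nlinarith [hC1, hC0, sq_nonneg C, sq_nonneg (C - 1), sq_nonneg (C*C - 1), mul_le_mul hC1 hC1 zero_le_one hC0]
  -- main estimate
  intro θ hθ t ht δ hδ
  obtain ⟨hθ0, hθM⟩ := hθ
  obtain ⟨ht0, htM⟩ := ht
  obtain ⟨hδ0, hδθ⟩ := hδ
  have htM' : t ∈ Set.Icc (0:ℝ) M := ⟨ht0, by linarith⟩
  have htd : t + δ ∈ Set.Icc (0:ℝ) M := ⟨by linarith, by linarith⟩
  have hIcoTsub : Set.Ico t (t + θ) ⊆ Set.Icc (0:ℝ) M := fun r hr =>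
    ⟨ht0.trans hr.1, by rcases hr with ⟨h1, h2⟩; linarith⟩
  -- integrability of f * X on measurable subsets of [0, M]
  have hintM : ∀ s : Set ℝ, s ⊆ Set.Icc (0:ℝ) M → MeasurableSet s →
      IntegrableOn (fun r => f r * X r) s ν := by
    intro s hsub hmeas
    haveI : IsFiniteMeasure (ν.restrict s) := ⟨by
      rw [Measure.restrict_apply_univ]
      exact ((measure_mono hsub).trans_lt (hfinIcc 0 M).lt_top)⟩
    refine Integrable.mono' (integrable_const (F * B))
      (hf_meas.mul hX_meas).aestronglyMeasurable ?_
    refine (ae_restrict_iff' hmeas).mpr (Filter.Eventually.of_forall fun r hr => ?_)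
    rw [Real.norm_eq_abs, abs_mul]
    exact mul_le_mul (hFs r (hsub hr)) (hBX r (hsub hr)) (abs_nonneg _) hF0
  have hI1 : IntegrableOn (fun r => f r * X r) (Set.Ico 0 t) ν :=
    hintM _ (fun r hr => ⟨hr.1, by rcases hr with ⟨h1, h2⟩; linarith⟩) measurableSet_Ico
  have hI2 : IntegrableOn (fun r => f r * X r) (Set.Ico t (t + δ)) ν :=
    hintM _ (fun r hr => hIcoTsub ⟨hr.1, by rcases hr with ⟨h1, h2⟩; linarith⟩) measurableSet_Ico
  have hsplit : (∫ s in Set.Ico (0:ℝ) (t + δ), f s * X s ∂ν)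
      = (∫ s in Set.Ico (0:ℝ) t, f s * X s ∂ν)
        + ∫ s in Set.Ico t (t + δ), f s * X s ∂ν := by
    rw [← setIntegral_union (Set.Ico_disjoint_Ico_same)
      measurableSet_Ico hI1 hI2, Set.Ico_union_Ico_eq_Ico ht0 (by linarith)]
  have hXdiff : X (t + δ) - X t
      = (∫ s in Set.Ico t (t + δ), f s * X s ∂ν) + (U (t + δ) - U t) := by
    rw [heq (t + δ) htd, heq t htM', hsplit]
    ring
  -- bound on the integral term
  have hμfin : ν (Set.Ico t (t + θ)) ≠ ∞ :=
    ne_top_of_le_ne_top (hfinIcc 0 M) (measure_mono hIcoTsub)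
  have hm1 : (ν (Set.Ico t (t + δ))).toReal ≤ (ν (Set.Ico t (t + θ))).toReal :=
    ENNReal.toReal_mono hμfin (measure_mono (Set.Ico_subset_Ico le_rfl (by linarith)))
  have hsupbdd : BddAbove ((fun t => (ν (Set.Ico t (t + θ))).toReal) ''
      Set.Icc (0:ℝ) (M - θ)) := by
    refine ⟨(ν (Set.Icc (0:ℝ) M)).toReal, ?_⟩
    rintro y ⟨r, hr, rfl⟩
    refine ENNReal.toReal_mono (hfinIcc 0 M) (measure_mono fun x hx => ?_)
    rcases hr with ⟨hr1, hr2⟩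
    rcases hx with ⟨hx1, hx2⟩
    exact ⟨hr1.trans hx1, by linarith⟩
  have hsup1 : (ν (Set.Ico t (t + θ))).toReal ≤ supμ θ := by
    rw [hsupμ θ]
    exact le_csSup hsupbdd ⟨t, ⟨ht0, htM⟩, rfl⟩
  have hsup0 : 0 ≤ supμ θ := ENNReal.toReal_nonneg.trans hsup1
  have hIbound : |∫ s in Set.Ico t (t + δ), f s * X s ∂ν|
      ≤ F * (C * C) * (ν (Set.Ico t (t + δ))).toReal := by
    have hlt : ν (Set.Ico t (t + δ)) < ∞ :=
      (ne_top_of_le_ne_top hμfin (measure_mono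
        (Set.Ico_subset_Ico le_rfl (by linarith)))).lt_top
    have hc : ∀ r ∈ Set.Ico t (t + δ), ‖f r * X r‖ ≤ F * (C * C) := by
      intro r hr
      have hrM : r ∈ Set.Icc (0:ℝ) M :=
        hIcoTsub ⟨hr.1, by rcases hr with ⟨h1, h2⟩; linarith⟩
      rw [Real.norm_eq_abs, abs_mul]
      exact mul_le_mul (hFs r hrM) (hXC r hrM) (abs_nonneg _) hF0
    have := norm_setIntegral_le_of_norm_le_const hlt hc
    simpa [Real.norm_eq_abs, measureReal_def] using this
  -- bound on the U oscillation term
  have hoscbdd : BddAbove ((fun p : ℝ × ℝ => |U (p.1 + p.2) - U p.1|) ''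
      (Set.Icc (0:ℝ) (M - θ) ×ˢ Set.Ico (0:ℝ) θ)) := by
    refine ⟨BU + BU, ?_⟩
    rintro y ⟨⟨p1, p2⟩, ⟨hp1, hp2⟩, rfl⟩
    rcases hp1 with ⟨h11, h12⟩
    rcases hp2 with ⟨h21, h22⟩
    refine (abs_sub _ _).trans (add_le_add ?_ ?_)
    · exact hBU _ ⟨by linarith, by linarith⟩
    · exact hBU _ ⟨by linarith, by linarith⟩
  have hUosc : |U (t + δ) - U t| ≤ oscU θ := by
    rw [hoscU θ]
    exact le_csSup hoscbdd ⟨(t, δ), ⟨⟨ht0, htM⟩, ⟨hδ0, hδθ⟩⟩, rfl⟩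
  -- conclude
  have hFC40 : 0 ≤ F * (C + C ^ 4) := mul_nonneg hF0 (by nlinarith [hC0, hC1])
  calc |X (t + δ) - X t|
      = |(∫ s in Set.Ico t (t + δ), f s * X s ∂ν) + (U (t + δ) - U t)| := by rw [hXdiff]
    _ ≤ |∫ s in Set.Ico t (t + δ), f s * X s ∂ν| + |U (t + δ) - U t| := abs_add_le _ _
    _ ≤ F * (C * C) * (ν (Set.Ico t (t + δ))).toReal + oscU θ :=
        add_le_add hIbound hUosc
    _ ≤ F * (C + C ^ 4) * supμ θ + oscU θ := by
        refine add_le_add_left ?_ _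
        have h1 : F * (C * C) * (ν (Set.Ico t (t + δ))).toReal
            ≤ F * (C * C) * supμ θ :=
          mul_le_mul_of_nonneg_left (hm1.trans hsup1)
            (mul_nonneg hF0 (mul_nonneg hC0 hC0))
        have h2 : F * (C * C) * supμ θ ≤ F * (C + C ^ 4) * supμ θ :=
          mul_le_mul_of_nonneg_right
            (mul_le_mul_of_nonneg_left hCC hF0) hsup0
        linarith
end
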